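/- Weak bisimilarity for the WHILE language is a congruence with respect to its operators: if p₁ ≈ p₂ and q₁ ≈ q₂ then p₁ ; q₁ ≈ p₂ ; q₂, and if p₁ ≈ p₂ then (while e p₁) ≈ (while e p₂) for every expression e. -/
import Mathlib


/-- Programs of the WHILE language:
`p ::= skip | v := e | p ; q | while e p`,
over variables `V` and arithmetic expressions `E`. -/
inductive Prog (V E : Type) : Type
  | skip : Prog V E
  | assign : V → E → Prog V E
  | seq : Prog V E → Prog V E → Prog V E
  | whileP : E → Prog V E → Prog V E

/-- Single steps of WHILE configurations: a configuration `(s, p)` steps to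
either a terminal configuration `(s', none)` (i.e. `(s', ✓)`) or to `(s', some p')`.
`eval e s` is the evaluation `[e]_s` of expression `e` in store `s`. -/
inductive WStepRel {V E : Type} [DecidableEq V] (eval : E → (V → ℕ) → ℕ) :
    (V → ℕ) × Prog V E → (V → ℕ) × Option (Prog V E) → Prop
  | skip (s : V → ℕ) : WStepRel eval (s, .skip) (s, none)
  | assign (s : V → ℕ) (v : V) (e : E) :
      WStepRel eval (s, .assign v e) (Function.update s v (eval e s), none)
  | seq1 {s s' : V → ℕ} {p q : Prog V E} :
      WStepRel eval (s, p) (s', none) → WStepRel eval (s, .seq p q) (s', some q)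
  | seq2 {s s' : V → ℕ} {p p' q : Prog V E} :
      WStepRel eval (s, p) (s', some p') →
      WStepRel eval (s, .seq p q) (s', some (.seq p' q))
  | while0 {s : V → ℕ} {e : E} {p : Prog V E} :
      eval e s = 0 → WStepRel eval (s, .whileP e p) (s, none)
  | while1 {s : V → ℕ} {e : E} {p : Prog V E} :
      eval e s ≠ 0 → WStepRel eval (s, .whileP e p) (s, some (.seq p (.whileP e p)))

/-- `→*`: the reflexive–transitive closure of the step relation on configurations
(terminal configurations do not step). -/
def Multi {V E : Type} [DecidableEq V] (eval : E → (V → ℕ) → ℕ) :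
    (V → ℕ) × Option (Prog V E) → (V → ℕ) × Option (Prog V E) → Prop :=
  Relation.ReflTransGen (fun c d => ∃ p, c.2 = some p ∧ WStepRel eval (c.1, p) d)

/-- A relation `R` on WHILE programs is a weak bisimulation if whenever `R p q`,
for every store `s`: terminating multi-steps of `p` are matched by `q` with the
same final store, multi-steps `(s, p) →* (t, p')` are matched by
`(s, q) →* (t, q')` with `R p' q'`, and symmetrically. -/
def IsWB {V E : Type} [DecidableEq V] (eval : E → (V → ℕ) → ℕ)
    (R : Prog V E → Prog V E → Prop) : Prop :=
  ∀ p q, R p q → ∀ s : V → ℕ,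
    (∀ t, Multi eval (s, some p) (t, none) → Multi eval (s, some q) (t, none)) ∧
    (∀ t p', Multi eval (s, some p) (t, some p') →
      ∃ q', Multi eval (s, some q) (t, some q') ∧ R p' q') ∧
    (∀ t, Multi eval (s, some q) (t, none) → Multi eval (s, some p) (t, none)) ∧
    (∀ t q', Multi eval (s, some q) (t, some q') →
      ∃ p', Multi eval (s, some p) (t, some p') ∧ R p' q')

/-- Weak bisimilarity of WHILE programs. -/
def WBisim {V E : Type} [DecidableEq V] (eval : E → (V → ℕ) → ℕ)
    (p q : Prog V E) : Prop :=
  ∃ R, IsWB eval R ∧ R p q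

section Aux
variable {V E : Type} [DecidableEq V] (eval : E → (V → ℕ) → ℕ)

lemma multi_step {s : V → ℕ} {p : Prog V E} {c : (V → ℕ) × Option (Prog V E)}
    (h : WStepRel eval (s, p) c) : Multi eval (s, some p) c :=
  Relation.ReflTransGen.single ⟨p, rfl, h⟩

lemma liftSeq (q : Prog V E) {s : V → ℕ} {p : Prog V E}
    {c : (V → ℕ) × Option (Prog V E)} (h : Multi eval (s, some p) c) :
    ∀ t p', c = (t, some p') →
      Multi eval (s, some (.seq p q)) (t, some (.seq p' q)) := by
  induction h with
  | refl =>
    rintro t p' ⟨⟩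
    exact .refl
  | @tail b c h1 h2 ih =>
    rintro t p' rfl
    obtain ⟨r, hr, hstep⟩ := h2
    obtain ⟨u, cu⟩ := b
    simp only at hr
    subst hr
    exact (ih u r rfl).tail ⟨.seq r q, rfl, .seq2 hstep⟩

lemma seqDone (q : Prog V E) {s t : V → ℕ} {p : Prog V E}
    (h : Multi eval (s, some p) (t, none)) :
    Multi eval (s, some (.seq p q)) (t, some q) := by
  rcases Relation.ReflTransGen.cases_tail h with h' | ⟨b, hb, r, hr, hstep⟩
  · exact absurd (congrArg Prod.snd h') (by simp)
  · obtain ⟨u, cu⟩ := b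
    simp only at hr
    subst hr
    exact (liftSeq eval q hb u r rfl).tail ⟨.seq r q, rfl, .seq1 hstep⟩

lemma seq_decomp {s : V → ℕ} {p q : Prog V E} {c : (V → ℕ) × Option (Prog V E)}
    (h : Multi eval (s, some (.seq p q)) c) :
    (∃ t p', c = (t, some (.seq p' q)) ∧ Multi eval (s, some p) (t, some p')) ∨
    (∃ u, Multi eval (s, some p) (u, none) ∧ Multi eval (u, some q) c) := by
  induction h with
  | refl => exact .inl ⟨s, p, rfl, .refl⟩
  | @tail b c h1 h2 ih =>
    obtain ⟨r, hr, hstep⟩ := h2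
    rcases ih with ⟨t, p', hc, hm⟩ | ⟨u, hm1, hm2⟩
    · subst hc
      injection hr with hr
      subst hr
      cases hstep with
      | seq1 h' => exact .inr ⟨_, hm.tail ⟨p', rfl, h'⟩, .refl⟩
      | seq2 h' => exact .inl ⟨_, _, rfl, hm.tail ⟨p', rfl, h'⟩⟩
    · exact .inr ⟨u, hm1, hm2.tail ⟨r, hr, hstep⟩⟩

def Iter (e : E) (p : Prog V E) : (V → ℕ) → (V → ℕ) → Prop :=
  Relation.ReflTransGen (fun u w => eval e u ≠ 0 ∧ Multi eval (u, some p) (w, none))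

lemma while_decomp {s : V → ℕ} {e : E} {p : Prog V E}
    {c : (V → ℕ) × Option (Prog V E)}
    (h : Multi eval (s, some (.whileP e p)) c) :
    ∃ u, Iter eval e p s u ∧
      ((c = (u, some (.whileP e p))) ∨
       (c = (u, none) ∧ eval e u = 0) ∨
       (eval e u ≠ 0 ∧ ∃ t a, c = (t, some (.seq a (.whileP e p))) ∧
          Multi eval (u, some p) (t, some a))) := by
  induction h with
  | refl => exact ⟨s, .refl, .inl rfl⟩
  | @tail b c h1 h2 ih =>
    obtain ⟨r, hr, hstep⟩ := h2
    obtain ⟨u, hiter, hcase⟩ := ih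
    rcases hcase with hc | ⟨hc, h0⟩ | ⟨hne, t, a, hc, hm⟩
    · subst hc
      injection hr with hr
      subst hr
      cases hstep with
      | while0 h0 => exact ⟨u, hiter, .inr (.inl ⟨rfl, h0⟩)⟩
      | while1 hne => exact ⟨u, hiter, .inr (.inr ⟨hne, u, p, rfl, .refl⟩)⟩
    · subst hc
      simp at hr
    · subst hc
      injection hr with hr
      subst hr
      cases hstep with
      | seq1 h' =>
        exact ⟨_, hiter.tail ⟨hne, hm.tail ⟨a, rfl, h'⟩⟩, .inl rfl⟩
      | seq2 h' =>
        exact ⟨u, hiter, .inr (.inr ⟨hne, _, _, rfl, hm.tail ⟨a, rfl, h'⟩⟩)⟩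

lemma iter_lift {e : E} {p : Prog V E} {s u : V → ℕ} (h : Iter eval e p s u) :
    Multi eval (s, some (.whileP e p)) (u, some (.whileP e p)) := by
  induction h with
  | refl => exact .refl
  | @tail b c h1 h2 ih =>
    exact ih.trans ((multi_step eval (.while1 h2.1)).trans (seqDone eval _ h2.2))

lemma wbisim_symm {p q : Prog V E} (h : WBisim eval p q) : WBisim eval q p := by
  obtain ⟨R, hR, hpq⟩ := h
  refine ⟨fun a b => R b a, fun a b hab s => ?_, hpq⟩
  obtain ⟨h1, h2, h3, h4⟩ := hR b a hab s
  exact ⟨h3, h4, h1, h2⟩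

lemma wbisim_isWB : IsWB eval (fun p q : Prog V E => WBisim eval p q) := by
  rintro p q ⟨R, hR, hpq⟩ s
  obtain ⟨h1, h2, h3, h4⟩ := hR p q hpq s
  exact ⟨h1, fun t p' ht => (h2 t p' ht).imp (fun q' hx => ⟨hx.1, R, hR, hx.2⟩),
    h3, fun t q' ht => (h4 t q' ht).imp (fun p' hx => ⟨hx.1, R, hR, hx.2⟩)⟩

lemma iter_sim {e : E} {p₁ p₂ : Prog V E} (h : WBisim eval p₁ p₂) {s u : V → ℕ}
    (hit : Iter eval e p₁ s u) : Iter eval e p₂ s u := by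
  induction hit with
  | refl => exact .refl
  | @tail b c h1 h2 ih =>
    exact ih.tail ⟨h2.1, (wbisim_isWB eval p₁ p₂ h b).1 c h2.2⟩

end Aux

section Main
variable {V E : Type} [DecidableEq V] (eval : E → (V → ℕ) → ℕ)

def Rseq (x y : Prog V E) : Prop :=
  (∃ a b c d, x = .seq a c ∧ y = .seq b d ∧ WBisim eval a b ∧ WBisim eval c d) ∨
  WBisim eval x y

lemma Rseq_symm {x y : Prog V E} (h : Rseq eval x y) : Rseq eval y x := by
  rcases h with ⟨a, b, c, d, rfl, rfl, hab, hcd⟩ | h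
  · exact .inl ⟨b, a, d, c, rfl, rfl, wbisim_symm eval hab, wbisim_symm eval hcd⟩
  · exact .inr (wbisim_symm eval h)

lemma seq_fwd_term {a b c d : Prog V E} (hab : WBisim eval a b)
    (hcd : WBisim eval c d) {s t : V → ℕ}
    (h : Multi eval (s, some (.seq a c)) (t, none)) :
    Multi eval (s, some (.seq b d)) (t, none) := by
  rcases seq_decomp eval h with ⟨t', p', hc, _⟩ | ⟨u, ha, hc⟩
  · exact absurd (congrArg Prod.snd hc) (by simp)
  · have hb := (wbisim_isWB eval a b hab s).1 u ha
    have hd := (wbisim_isWB eval c d hcd u).1 t hc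
    exact (seqDone eval d hb).trans hd

lemma seq_fwd_run {a b c d : Prog V E} (hab : WBisim eval a b)
    (hcd : WBisim eval c d) {s t : V → ℕ} {x : Prog V E}
    (h : Multi eval (s, some (.seq a c)) (t, some x)) :
    ∃ y, Multi eval (s, some (.seq b d)) (t, some y) ∧ Rseq eval x y := by
  rcases seq_decomp eval h with ⟨t', p', hc, hm⟩ | ⟨u, ha, hc⟩
  · obtain ⟨rfl, hx⟩ := Prod.mk.inj hc
    injection hx with hx
    subst hx
    obtain ⟨b', hb', habs⟩ := (wbisim_isWB eval a b hab s).2.1 _ p' hm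
    exact ⟨.seq b' d, liftSeq eval d hb' t b' rfl,
      .inl ⟨p', b', c, d, rfl, rfl, habs, hcd⟩⟩
  · obtain ⟨d', hd', hxd⟩ := (wbisim_isWB eval c d hcd u).2.1 t x hc
    have hb := (wbisim_isWB eval a b hab s).1 u ha
    exact ⟨d', (seqDone eval d hb).trans hd', .inr hxd⟩

lemma Rseq_isWB : IsWB eval (Rseq eval (V := V) (E := E)) := by
  intro x y hxy s
  rcases hxy with ⟨a, b, c, d, rfl, rfl, hab, hcd⟩ | h
  · refine ⟨fun t ht => seq_fwd_term eval hab hcd ht,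
      fun t p' ht => (seq_fwd_run eval hab hcd ht).imp fun q' hq => ⟨hq.1, hq.2⟩,
      fun t ht => seq_fwd_term eval (wbisim_symm eval hab) (wbisim_symm eval hcd) ht,
      fun t q' ht => ?_⟩
    obtain ⟨p', hp', hr⟩ :=
      seq_fwd_run eval (wbisim_symm eval hab) (wbisim_symm eval hcd) ht
    exact ⟨p', hp', Rseq_symm eval hr⟩
  · obtain ⟨h1, h2, h3, h4⟩ := wbisim_isWB eval x y h s
    exact ⟨h1, fun t p' ht => (h2 t p' ht).imp fun q' hq => ⟨hq.1, .inr hq.2⟩,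
      h3, fun t q' ht => (h4 t q' ht).imp fun p' hp => ⟨hp.1, .inr hp.2⟩⟩

def Rwhile (e : E) (p₁ p₂ : Prog V E) (x y : Prog V E) : Prop :=
  (x = .whileP e p₁ ∧ y = .whileP e p₂) ∨
  (∃ a b, x = .seq a (.whileP e p₁) ∧ y = .seq b (.whileP e p₂) ∧ WBisim eval a b)

lemma Rwhile_symm {e : E} {p₁ p₂ x y : Prog V E} (h : Rwhile eval e p₁ p₂ x y) :
    Rwhile eval e p₂ p₁ y x := by
  rcases h with ⟨rfl, rfl⟩ | ⟨a, b, rfl, rfl, hab⟩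
  · exact .inl ⟨rfl, rfl⟩
  · exact .inr ⟨b, a, rfl, rfl, wbisim_symm eval hab⟩

lemma while_fwd_term {e : E} {p₁ p₂ : Prog V E} (h : WBisim eval p₁ p₂)
    {s t : V → ℕ} (hm : Multi eval (s, some (.whileP e p₁)) (t, none)) :
    Multi eval (s, some (.whileP e p₂)) (t, none) := by
  obtain ⟨u, hiter, hcase⟩ := while_decomp eval hm
  rcases hcase with hc | ⟨hc, h0⟩ | ⟨hne, t', a, hc, _⟩
  · exact absurd (congrArg Prod.snd hc) (by simp)
  · obtain ⟨rfl, -⟩ := Prod.mk.inj hc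
    exact (iter_lift eval (iter_sim eval h hiter)).tail
      ⟨.whileP e p₂, rfl, .while0 h0⟩
  · exact absurd (congrArg Prod.snd hc) (by simp)

lemma while_fwd_run {e : E} {p₁ p₂ : Prog V E} (h : WBisim eval p₁ p₂)
    {s t : V → ℕ} {x : Prog V E}
    (hm : Multi eval (s, some (.whileP e p₁)) (t, some x)) :
    ∃ y, Multi eval (s, some (.whileP e p₂)) (t, some y) ∧
      Rwhile eval e p₁ p₂ x y := by
  obtain ⟨u, hiter, hcase⟩ := while_decomp eval hm
  rcases hcase with hc | ⟨hc, h0⟩ | ⟨hne, t', a, hc, hma⟩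
  · obtain ⟨rfl, hx⟩ := Prod.mk.inj hc
    injection hx with hx
    subst hx
    exact ⟨.whileP e p₂, iter_lift eval (iter_sim eval h hiter), .inl ⟨rfl, rfl⟩⟩
  · exact absurd (congrArg Prod.snd hc) (by simp)
  · obtain ⟨rfl, hx⟩ := Prod.mk.inj hc
    injection hx with hx
    subst hx
    obtain ⟨b, hb, habs⟩ := (wbisim_isWB eval p₁ p₂ h u).2.1 t a hma
    refine ⟨.seq b (.whileP e p₂), ?_, .inr ⟨a, b, rfl, rfl, habs⟩⟩
    exact ((iter_lift eval (iter_sim eval h hiter)).tail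
      ⟨.whileP e p₂, rfl, .while1 hne⟩).trans
      (liftSeq eval (.whileP e p₂) hb t b rfl)

lemma whileseq_fwd_term {e : E} {p₁ p₂ a b : Prog V E} (h : WBisim eval p₁ p₂)
    (hab : WBisim eval a b) {s t : V → ℕ}
    (hm : Multi eval (s, some (.seq a (.whileP e p₁))) (t, none)) :
    Multi eval (s, some (.seq b (.whileP e p₂))) (t, none) := by
  rcases seq_decomp eval hm with ⟨t', p', hc, _⟩ | ⟨u, ha, hc⟩
  · exact absurd (congrArg Prod.snd hc) (by simp)
  · have hb := (wbisim_isWB eval a b hab s).1 u ha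
    exact (seqDone eval _ hb).trans (while_fwd_term eval h hc)

lemma whileseq_fwd_run {e : E} {p₁ p₂ a b : Prog V E} (h : WBisim eval p₁ p₂)
    (hab : WBisim eval a b) {s t : V → ℕ} {x : Prog V E}
    (hm : Multi eval (s, some (.seq a (.whileP e p₁))) (t, some x)) :
    ∃ y, Multi eval (s, some (.seq b (.whileP e p₂))) (t, some y) ∧
      Rwhile eval e p₁ p₂ x y := by
  rcases seq_decomp eval hm with ⟨t', p', hc, hma⟩ | ⟨u, ha, hc⟩
  · obtain ⟨rfl, hx⟩ := Prod.mk.inj hc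
    injection hx with hx
    subst hx
    obtain ⟨b', hb', habs⟩ := (wbisim_isWB eval a b hab s).2.1 t p' hma
    exact ⟨.seq b' (.whileP e p₂), liftSeq eval _ hb' t b' rfl,
      .inr ⟨p', b', rfl, rfl, habs⟩⟩
  · have hb := (wbisim_isWB eval a b hab s).1 u ha
    obtain ⟨y, hy, hr⟩ := while_fwd_run eval h hc
    exact ⟨y, (seqDone eval _ hb).trans hy, hr⟩

lemma Rwhile_isWB {e : E} {p₁ p₂ : Prog V E} (h : WBisim eval p₁ p₂) :
    IsWB eval (Rwhile eval e p₁ p₂) := by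
  have h' := wbisim_symm eval h
  intro x y hxy s
  rcases hxy with ⟨rfl, rfl⟩ | ⟨a, b, rfl, rfl, hab⟩
  · exact ⟨fun t ht => while_fwd_term eval h ht,
      fun t p' ht => while_fwd_run eval h ht,
      fun t ht => while_fwd_term eval h' ht,
      fun t q' ht => (while_fwd_run eval h' ht).imp
        fun p' hp => ⟨hp.1, Rwhile_symm eval hp.2⟩⟩
  · exact ⟨fun t ht => whileseq_fwd_term eval h hab ht,
      fun t p' ht => whileseq_fwd_run eval h hab ht,
      fun t ht => whileseq_fwd_term eval h' (wbisim_symm eval hab) ht,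
      fun t q' ht => (whileseq_fwd_run eval h' (wbisim_symm eval hab) ht).imp
        fun p' hp => ⟨hp.1, Rwhile_symm eval hp.2⟩⟩

end Main

/-- Weak bisimilarity for WHILE is a congruence with respect to sequential
composition and while-loops. -/
theorem while_wbisim_congruence (V E : Type) [DecidableEq V]
    (eval : E → (V → ℕ) → ℕ) :
    (∀ p₁ p₂ q₁ q₂ : Prog V E, WBisim eval p₁ p₂ → WBisim eval q₁ q₂ →
      WBisim eval (.seq p₁ q₁) (.seq p₂ q₂)) ∧
    (∀ (p₁ p₂ : Prog V E) (e : E), WBisim eval p₁ p₂ →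
      WBisim eval (.whileP e p₁) (.whileP e p₂)) := by
  constructor
  · intro p₁ p₂ q₁ q₂ hp hq
    exact ⟨Rseq eval, Rseq_isWB eval, .inl ⟨p₁, p₂, q₁, q₂, rfl, rfl, hp, hq⟩⟩
  · intro p₁ p₂ e hp
    exact ⟨Rwhile eval e p₁ p₂, Rwhile_isWB eval hp, .inl ⟨rfl, rfl⟩⟩
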